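/- arXiv:1003.1568 — 2 statements merged into one kernel-verified Lean document; each statement's English description precedes it below -/
import Mathlib

section
/- Let k and n be coprime positive integers, let Γ = {ak + bn : a, b ∈ ℕ}, and let N_l denote the number of semigroup ideals of Γ of colength l (a finite number for each l). Then in the formal power series ring ℤ[[q]] one has (1 − q^{k+n}) · Σ_{l ≥ 0} N_l q^l = binom(k+n, k)_q, the Gaussian binomial coefficient. -/
/-- The `q`-factorial `[s]!_q = ∏_{j=1}^{s} (1 − q^j)` in `ℤ[[q]]`. -/
noncomputable def qFact (s : ℕ) : PowerSeries ℤ :=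
  ∏ j ∈ Finset.range s, (1 - PowerSeries.X ^ (j + 1))

/-- The Gaussian binomial coefficient `binom(m, r)_q = [m]!_q / ([r]!_q [m−r]!_q)`,
the quotient being taken in `ℤ[[q]]` (the denominator has constant term `1`, hence is
a unit with inverse `invOfUnit _ 1`). -/
noncomputable def gaussBinom (m r : ℕ) : PowerSeries ℤ :=
  qFact m * PowerSeries.invOfUnit (qFact r * qFact (m - r)) 1


set_option linter.unusedSectionVars false
set_option maxHeartbeats 1000000


open Finset PowerSeries Classical in
noncomputable def boxT (a b l : ℕ) : Finset (Fin a → ℕ) :=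
  (Fintype.piFinset fun _ : Fin a => Finset.range (b+1)).filter
    (fun f => (∀ i j : Fin a, i ≤ j → f j ≤ f i) ∧ (∑ i, f i = l))

lemma mem_boxT {a b l : ℕ} {f : Fin a → ℕ} :
    f ∈ boxT a b l ↔ (∀ i, f i ≤ b) ∧ (∀ i j : Fin a, i ≤ j → f j ≤ f i) ∧ (∑ i, f i = l) := by
  classical
  simp only [boxT, Finset.mem_filter, Fintype.mem_piFinset, Finset.mem_range, Nat.lt_succ_iff]


lemma snoc_anti {a : ℕ} (g : Fin a → ℕ) (h2 : ∀ i j : Fin a, i ≤ j → g j ≤ g i) :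
    ∀ i j : Fin (a+1), i ≤ j →
      (Fin.snoc g 0 : Fin (a+1) → ℕ) j ≤ (Fin.snoc g 0 : Fin (a+1) → ℕ) i := by
  intro i j hij
  by_cases hj : (j : ℕ) = a
  · have : j = Fin.last a := Fin.ext hj
    subst this
    simp
  · have hj' : (j : ℕ) < a := lt_of_le_of_ne (Nat.lt_succ_iff.mp j.2) hj
    have hi' : (i : ℕ) < a := lt_of_le_of_lt (Fin.le_def.mp hij) hj'
    have ej : (Fin.snoc g 0 : Fin (a+1) → ℕ) j = g ⟨j, hj'⟩ := by
      simp only [Fin.snoc, hj', dif_pos]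
      rfl
    have ei : (Fin.snoc g 0 : Fin (a+1) → ℕ) i = g ⟨i, hi'⟩ := by
      simp only [Fin.snoc, hi', dif_pos]
      rfl
    rw [ei, ej]
    exact h2 _ _ (Fin.le_def.mpr (by simpa using Fin.le_def.mp hij))

lemma boxT_rec (a b l : ℕ) :
    (boxT (a+1) (b+1) l).card =
      (boxT a (b+1) l).card + if a+1 ≤ l then (boxT (a+1) b (l-(a+1))).card else 0 := by
  classical
  rw [← Finset.card_filter_add_card_filter_not
    (s := boxT (a+1) (b+1) l) (p := fun f => f (Fin.last a) = 0)]
  congr 1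
  · -- drop the last (zero) coordinate
    refine Finset.card_nbij' (fun f => f ∘ Fin.castSucc) (fun g => Fin.snoc g 0) ?_ ?_ ?_ ?_
    · intro f hf
      simp only [Finset.mem_coe, Finset.mem_filter, mem_boxT] at hf
      obtain ⟨⟨h1, h2, h3⟩, h4⟩ := hf
      refine mem_boxT.mpr ⟨fun i => h1 _, fun i j hij => h2 _ _ (by simpa using hij), ?_⟩
      rw [Fin.sum_univ_castSucc] at h3
      simpa [h4] using h3
    · intro g hg
      rw [Finset.mem_coe, mem_boxT] at hg
      obtain ⟨h1, h2, h3⟩ := hg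
      simp only [Finset.mem_coe, Finset.mem_filter, mem_boxT]
      refine ⟨⟨?_, ?_, ?_⟩, by simp⟩
      · intro i
        refine Fin.lastCases ?_ ?_ i <;> simp
        · intro i'; exact le_trans (h1 i') (by omega)
      · exact snoc_anti g h2
      · rw [Fin.sum_univ_castSucc]; simp [h3]
    · intro f hf
      simp only [Finset.mem_coe, Finset.mem_filter] at hf
      funext i
      refine Fin.lastCases ?_ ?_ i
      · simp [hf.2]
      · intro i'; simp
    · intro g hg
      funext i; simp
  · -- last coordinate positive: subtract 1 everywhere
    by_cases hal : a + 1 ≤ l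
    · rw [if_pos hal]
      refine Finset.card_nbij' (fun f => fun i => f i - 1) (fun g => fun i => g i + 1) ?_ ?_ ?_ ?_
      · intro f hf
        simp only [Finset.mem_coe, Finset.mem_filter, mem_boxT] at hf
        obtain ⟨⟨h1, h2, h3⟩, h4⟩ := hf
        have hpos : ∀ i, 1 ≤ f i := fun i => by
          have := h2 i (Fin.last a) (Fin.le_last i); omega
        refine mem_boxT.mpr ⟨?_, ?_, ?_⟩
        · intro i; show f i - 1 ≤ b; have := h1 i; omega
        · intro i j hij; show f j - 1 ≤ f i - 1; have := h2 i j hij; omega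
        show ∑ i, (f i - 1) = l - (a+1)
        have hs : ∑ i, (f i - 1 + 1) = l := by
          rw [Finset.sum_congr rfl fun i _ => Nat.sub_add_cancel (hpos i)]; exact h3
        rw [Finset.sum_add_distrib] at hs
        simp only [Finset.sum_const, Finset.card_univ, Fintype.card_fin, smul_eq_mul,
          mul_one] at hs
        omega
      · intro g hg
        rw [Finset.mem_coe, mem_boxT] at hg
        obtain ⟨h1, h2, h3⟩ := hg
        simp only [Finset.mem_coe, Finset.mem_filter, mem_boxT]
        refine ⟨⟨?_, ?_, ?_⟩, ?_⟩
        · intro i; show g i + 1 ≤ b + 1; have := h1 i; omega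
        · intro i j hij; show g j + 1 ≤ g i + 1; have := h2 i j hij; omega
        · show ∑ i, (g i + 1) = l
          rw [Finset.sum_add_distrib]
          simp only [Finset.sum_const, Finset.card_univ, Fintype.card_fin, smul_eq_mul,
            mul_one, h3]
          omega
        · show ¬ (g (Fin.last a) + 1 = 0)
          omega
      · intro f hf
        simp only [Finset.mem_coe, Finset.mem_filter, mem_boxT] at hf
        obtain ⟨⟨h1, h2, h3⟩, h4⟩ := hf
        have hpos : ∀ i, 1 ≤ f i := fun i => by
          have := h2 i (Fin.last a) (Fin.le_last i); omega
        funext i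
        show f i - 1 + 1 = f i
        have := hpos i
        omega
      · intro g hg; funext i; simp
    · rw [if_neg hal]
      rw [Finset.card_eq_zero, Finset.eq_empty_iff_forall_notMem]
      intro f hf
      simp only [Finset.mem_coe, Finset.mem_filter, mem_boxT] at hf
      obtain ⟨⟨h1, h2, h3⟩, h4⟩ := hf
      have hpos : ∀ i, 1 ≤ f i := fun i => by
        have := h2 i (Fin.last a) (Fin.le_last i); omega
      have : (a+1) * 1 ≤ ∑ i, f i := by
        calc (a+1) * 1 = ∑ _i : Fin (a+1), 1 := by simp [mul_comm]
        _ ≤ ∑ i, f i := Finset.sum_le_sum fun i _ => hpos i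
      omega

lemma boxT_zero (b l : ℕ) : (boxT 0 b l).card = if l = 0 then 1 else 0 := by
  classical
  rcases Nat.eq_zero_or_pos l with rfl | hl
  · rw [if_pos rfl, Finset.card_eq_one]
    exact ⟨fun _ => 0, by ext f; simp [mem_boxT]; exact (funext fun i => absurd i.2 (by omega))⟩
  · rw [if_neg (by omega), Finset.card_eq_zero]
    ext f; simp [mem_boxT]; omega

lemma boxT_zero' (a l : ℕ) : (boxT a 0 l).card = if l = 0 then 1 else 0 := by
  classical
  rcases Nat.eq_zero_or_pos l with rfl | hl
  · rw [if_pos rfl, Finset.card_eq_one]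
    refine ⟨fun _ => 0, ?_⟩
    ext f
    simp only [mem_boxT, Finset.mem_singleton, Nat.le_zero]
    constructor
    · rintro ⟨h1, -, -⟩; funext i; exact h1 i
    · rintro rfl; exact ⟨fun i => rfl, fun i j _ => le_rfl, by simp⟩
  · rw [if_neg (by omega), Finset.card_eq_zero]
    ext f
    simp only [mem_boxT, Finset.notMem_empty, iff_false, not_and, Nat.le_zero]
    intro h1 _ h3
    have : ∑ i, f i = 0 := Finset.sum_eq_zero fun i _ => h1 i
    omega

open Finset PowerSeries Classical in
/-- tuples of minimal "heights" of ideals: antitone, wrap condition, sum `l` -/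
noncomputable def idT (k n l : ℕ) : Finset (Fin k → ℕ) :=
  (Fintype.piFinset fun _ : Fin k => Finset.range (l+1)).filter
    (fun f => (∀ i j : Fin k, i ≤ j → f j ≤ f i) ∧ (∀ i j : Fin k, f i ≤ f j + n) ∧ (∑ i, f i = l))

lemma mem_idT {k n l : ℕ} {f : Fin k → ℕ} :
    f ∈ idT k n l ↔ (∀ i j : Fin k, i ≤ j → f j ≤ f i) ∧
      (∀ i j : Fin k, f i ≤ f j + n) ∧ (∑ i, f i = l) := by
  classical
  simp only [idT, Finset.mem_filter, Fintype.mem_piFinset, Finset.mem_range, Nat.lt_succ_iff]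
  constructor
  · tauto
  · intro h
    refine ⟨fun i => ?_, h⟩
    rw [← h.2.2]
    exact Finset.single_le_sum (fun j _ => Nat.zero_le (f j)) (Finset.mem_univ i)

lemma idT_rec (a n l : ℕ) :
    (idT (a+1) n l).card =
      (boxT a n l).card + if a+1 ≤ l then (idT (a+1) n (l-(a+1))).card else 0 := by
  classical
  rw [← Finset.card_filter_add_card_filter_not
    (s := idT (a+1) n l) (p := fun f => f (Fin.last a) = 0)]
  congr 1
  · refine Finset.card_nbij' (fun f => f ∘ Fin.castSucc) (fun g => Fin.snoc g 0) ?_ ?_ ?_ ?_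
    · intro f hf
      simp only [Finset.mem_coe, Finset.mem_filter, mem_idT] at hf
      obtain ⟨⟨h1, h2, h3⟩, h4⟩ := hf
      refine mem_boxT.mpr ⟨?_, fun i j hij => h1 _ _ (by simpa using hij), ?_⟩
      · intro i
        have := h2 i.castSucc (Fin.last a)
        rw [h4] at this
        simpa using this
      · rw [Fin.sum_univ_castSucc] at h3
        simp only [Function.comp]
        omega
    · intro g hg
      rw [Finset.mem_coe, mem_boxT] at hg
      obtain ⟨h1, h2, h3⟩ := hg
      have hble : ∀ i : Fin (a+1), (Fin.snoc g 0 : Fin (a+1) → ℕ) i ≤ n := by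
        intro i
        refine Fin.lastCases ?_ ?_ i <;> simp
        intro i'; exact h1 i'
      simp only [Finset.mem_coe, Finset.mem_filter, mem_idT]
      refine ⟨⟨snoc_anti g h2, ?_, ?_⟩, by simp⟩
      · intro i j
        exact le_trans (hble i) (Nat.le_add_left n _)
      · rw [Fin.sum_univ_castSucc]; simp [h3]
    · intro f hf
      simp only [Finset.mem_coe, Finset.mem_filter] at hf
      funext i
      refine Fin.lastCases ?_ ?_ i
      · simp [hf.2]
      · intro i'; simp
    · intro g hg
      funext i; simp
  · by_cases hal : a + 1 ≤ l
    · rw [if_pos hal]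
      refine Finset.card_nbij' (fun f => fun i => f i - 1) (fun g => fun i => g i + 1) ?_ ?_ ?_ ?_
      · intro f hf
        simp only [Finset.mem_coe, Finset.mem_filter, mem_idT] at hf
        obtain ⟨⟨h1, h2, h3⟩, h4⟩ := hf
        have hpos : ∀ i, 1 ≤ f i := fun i => by
          have := h1 i (Fin.last a) (Fin.le_last i); omega
        refine mem_idT.mpr ⟨?_, ?_, ?_⟩
        · intro i j hij; show f j - 1 ≤ f i - 1; have := h1 i j hij; omega
        · intro i j; show f i - 1 ≤ f j - 1 + n
          have := h2 i j; have := hpos j; omega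
        · show ∑ i, (f i - 1) = l - (a+1)
          have hs : ∑ i, (f i - 1 + 1) = l := by
            rw [Finset.sum_congr rfl fun i _ => Nat.sub_add_cancel (hpos i)]; exact h3
          rw [Finset.sum_add_distrib] at hs
          simp only [Finset.sum_const, Finset.card_univ, Fintype.card_fin, smul_eq_mul,
            mul_one] at hs
          omega
      · intro g hg
        rw [Finset.mem_coe, mem_idT] at hg
        obtain ⟨h1, h2, h3⟩ := hg
        simp only [Finset.mem_coe, Finset.mem_filter, mem_idT]
        refine ⟨⟨?_, ?_, ?_⟩, ?_⟩
        · intro i j hij; show g j + 1 ≤ g i + 1; have := h1 i j hij; omega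
        · intro i j; show g i + 1 ≤ g j + 1 + n; have := h2 i j; omega
        · show ∑ i, (g i + 1) = l
          rw [Finset.sum_add_distrib]
          simp only [Finset.sum_const, Finset.card_univ, Fintype.card_fin, smul_eq_mul,
            mul_one, h3]
          omega
        · show ¬ (g (Fin.last a) + 1 = 0)
          omega
      · intro f hf
        simp only [Finset.mem_coe, Finset.mem_filter, mem_idT] at hf
        obtain ⟨⟨h1, h2, h3⟩, h4⟩ := hf
        have hpos : ∀ i, 1 ≤ f i := fun i => by
          have := h1 i (Fin.last a) (Fin.le_last i); omega
        funext i
        show f i - 1 + 1 = f i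
        have := hpos i; omega
      · intro g hg; funext i; simp
    · rw [if_neg hal]
      rw [Finset.card_eq_zero, Finset.eq_empty_iff_forall_notMem]
      intro f hf
      simp only [Finset.mem_coe, Finset.mem_filter, mem_idT] at hf
      obtain ⟨⟨h1, h2, h3⟩, h4⟩ := hf
      have hpos : ∀ i, 1 ≤ f i := fun i => by
        have := h1 i (Fin.last a) (Fin.le_last i); omega
      have : (a+1) * 1 ≤ ∑ i, f i := by
        calc (a+1) * 1 = ∑ _i : Fin (a+1), 1 := by simp [mul_comm]
        _ ≤ ∑ i, f i := Finset.sum_le_sum fun i _ => hpos i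
      omega


noncomputable def Pbox (a b : ℕ) : PowerSeries ℤ :=
  PowerSeries.mk fun l => ((boxT a b l).card : ℤ)

open PowerSeries

lemma X_pow_mul_mk (m : ℕ) (f : ℕ → ℤ) :
    (X : PowerSeries ℤ)^m * mk f = mk (fun l => if m ≤ l then f (l - m) else 0) := by
  ext l
  rw [PowerSeries.coeff_X_pow_mul']
  simp [PowerSeries.coeff_mk]

lemma Pbox_left_zero (b : ℕ) : Pbox 0 b = 1 := by
  ext l
  simp [Pbox, boxT_zero, PowerSeries.coeff_one, PowerSeries.coeff_mk]

lemma Pbox_right_zero (a : ℕ) : Pbox a 0 = 1 := by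
  ext l
  simp [Pbox, boxT_zero', PowerSeries.coeff_one, PowerSeries.coeff_mk]

lemma Pbox_rec (a b : ℕ) :
    Pbox (a+1) (b+1) = Pbox a (b+1) + X^(a+1) * Pbox (a+1) b := by
  rw [Pbox, Pbox, Pbox, X_pow_mul_mk]
  ext l
  simp only [PowerSeries.coeff_mk, map_add, boxT_rec a b l]
  push_cast
  split <;> simp

lemma qFact_succ (s : ℕ) : qFact (s+1) = qFact s * (1 - X^(s+1)) := by
  rw [qFact, Finset.prod_range_succ, qFact]

lemma Pbox_mul_qFact : ∀ a b : ℕ, Pbox a b * qFact a * qFact b = qFact (a+b) := by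
  intro a
  induction a with
  | zero => intro b; simp [Pbox_left_zero, qFact]
  | succ a iha =>
    intro b
    induction b with
    | zero => simp [Pbox_right_zero, qFact]
    | succ b ihb =>
      rw [Pbox_rec, add_mul, add_mul]
      have e1 : Pbox a (b+1) * qFact (a+1) * qFact (b+1)
          = (1 - X^(a+1)) * qFact (a+b+1) := by
        rw [qFact_succ a]
        have iha' := iha (b+1)
        rw [show a + (b+1) = a+b+1 from rfl] at iha'
        linear_combination (1 - X^(a+1)) * iha'
      have e2 : X^(a+1) * Pbox (a+1) b * qFact (a+1) * qFact (b+1)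
          = X^(a+1) * (1 - X^(b+1)) * qFact (a+b+1) := by
        rw [qFact_succ b]
        rw [show a+1+b = a+b+1 from by omega] at ihb
        linear_combination X^(a+1) * (1 - X^(b+1)) * ihb
      rw [e1, e2]
      rw [show a+1+(b+1) = (a+b+1)+1 from by ring, qFact_succ (a+b+1)]
      ring

lemma constantCoeff_qFact (s : ℕ) : constantCoeff (qFact s) = 1 := by
  rw [qFact, map_prod]
  apply Finset.prod_eq_one
  intro j _
  simp

lemma assemble (k n : ℕ) (hk : 0 < k) (S : PowerSeries ℤ)
    (hS : (1 - X^k) * S = Pbox (k-1) n) :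
    (1 - X^(k+n)) * S = gaussBinom (k+n) k := by
  have hU : constantCoeff (qFact k * qFact n) = (1 : ℤˣ) := by
    rw [map_mul, constantCoeff_qFact, constantCoeff_qFact]; simp
  have hinv : (qFact k * qFact n) * PowerSeries.invOfUnit (qFact k * qFact n) 1 = 1 :=
    PowerSeries.mul_invOfUnit _ 1 hU
  have key : (1 - X^(k+n)) * S * (qFact k * qFact n) = qFact (k+n) := by
    obtain ⟨k', rfl⟩ : ∃ k', k = k'+1 := ⟨k-1, by omega⟩
    rw [qFact_succ k']
    rw [show k'+1-1 = k' from rfl] at hS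
    have hP := Pbox_mul_qFact k' n
    rw [show k'+1+n = (k'+n)+1 from by omega, qFact_succ (k'+n)]
    linear_combination (1 - X^(k'+n+1)) * qFact k' * qFact n * hS
      + (1 - X^(k'+n+1)) * hP
  have : gaussBinom (k+n) k = qFact (k+n) * PowerSeries.invOfUnit (qFact k * qFact n) 1 := by
    rw [gaussBinom, show k+n-k = n from by omega]
  rw [this, ← key]
  calc (1 - X^(k+n)) * S
      = (1 - X^(k+n)) * S * ((qFact k * qFact n) * PowerSeries.invOfUnit (qFact k * qFact n) 1) := by
        rw [hinv, mul_one]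
    _ = (1 - X^(k+n)) * S * (qFact k * qFact n) * PowerSeries.invOfUnit (qFact k * qFact n) 1 := by
        ring


section Ideals
variable {k n : ℕ}

/-- the set of elements of the ideal associated to a height tuple `f` -/
def Phi (n : ℕ) (f : Fin k → ℕ) : Set ℕ :=
  {m | ∃ b : Fin k, ∃ j : ℕ, f b ≤ j ∧ m = (b : ℕ) * n + j * k}

variable (hk : 0 < k) (hn : 0 < n) (hkn : Nat.Coprime k n)
include hk hn hkn

/-- uniqueness of the representation `b*n + j*k`, `b < k` -/
lemma rep_unique {b b' : Fin k} {j j' : ℕ}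
    (h : (b : ℕ) * n + j * k = (b' : ℕ) * n + j' * k) : b = b' ∧ j = j' := by
  haveI : NeZero k := ⟨hk.ne'⟩
  have hc : ((b : ℕ) * n + j * k : ℕ) = ((b' : ℕ) * n + j' * k : ℕ) := h
  have hz : ((b : ℕ) : ZMod k) * (n : ZMod k) = ((b' : ℕ) : ZMod k) * (n : ZMod k) := by
    have := congrArg (fun m : ℕ => (m : ZMod k)) hc
    push_cast at this
    simpa [ZMod.natCast_self] using this
  have hu : IsUnit (n : ZMod k) := (ZMod.isUnit_iff_coprime n k).mpr hkn.symm
  have hb : ((b : ℕ) : ZMod k) = ((b' : ℕ) : ZMod k) := by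
    have h1 : ((b : ℕ) : ZMod k) * ((n : ZMod k) * (n : ZMod k)⁻¹)
        = ((b' : ℕ) : ZMod k) * ((n : ZMod k) * (n : ZMod k)⁻¹) := by
      rw [← mul_assoc, ← mul_assoc, hz]
    rwa [ZMod.mul_inv_of_unit _ hu, mul_one, mul_one] at h1
  have hbv : (b : ℕ) = (b' : ℕ) := by
    have := congrArg ZMod.val hb
    rwa [ZMod.val_natCast_of_lt b.2, ZMod.val_natCast_of_lt b'.2] at this
  have hbb : b = b' := Fin.ext hbv
  subst hbb
  refine ⟨rfl, ?_⟩
  have : j * k = j' * k := by omega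
  exact Nat.eq_of_mul_eq_mul_right hk this

lemma mem_Gamma {m : ℕ} :
    (∃ a b : ℕ, m = a * k + b * n) ↔ ∃ (b : Fin k) (j : ℕ), m = (b : ℕ) * n + j * k := by
  constructor
  · rintro ⟨a, c, rfl⟩
    refine ⟨⟨c % k, Nat.mod_lt _ hk⟩, a + c / k * n, ?_⟩
    have e : c % k + c / k * k = c := Nat.mod_add_div' c k
    calc a * k + c * n = a * k + (c % k + c / k * k) * n := by rw [e]
      _ = (c % k : ℕ) * n + (a + c / k * n) * k := by ring
  · rintro ⟨b, j, rfl⟩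
    exact ⟨j, b, by ring⟩

lemma mem_Phi {f : Fin k → ℕ} {b : Fin k} {j : ℕ} :
    (b : ℕ) * n + j * k ∈ Phi n f ↔ f b ≤ j := by
  constructor
  · rintro ⟨b', j', hle, he⟩
    obtain ⟨rfl, rfl⟩ := rep_unique hk hn hkn he.symm
    exact hle
  · intro h; exact ⟨b, j, h, rfl⟩


lemma Phi_subset {f : Fin k → ℕ} :
    Phi n f ⊆ {m : ℕ | ∃ a b : ℕ, m = a * k + b * n} := by
  rintro m ⟨b, j, hle, rfl⟩
  exact ⟨j, b, by ring⟩

lemma Phi_nonempty {f : Fin k → ℕ} : (Phi n f).Nonempty := by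
  refine ⟨(⟨0, hk⟩ : Fin k) * n + f ⟨0, hk⟩ * k, ⟨0, hk⟩, f ⟨0, hk⟩, le_rfl, rfl⟩

lemma Phi_add_k {f : Fin k → ℕ} {m : ℕ} (hm : m ∈ Phi n f) : m + k ∈ Phi n f := by
  obtain ⟨b, j, hle, rfl⟩ := hm
  exact ⟨b, j + 1, by omega, by ring⟩

lemma Phi_add_n {f : Fin k → ℕ}
    (h1 : ∀ i j : Fin k, i ≤ j → f j ≤ f i) (h2 : ∀ i j : Fin k, f i ≤ f j + n)
    {m : ℕ} (hm : m ∈ Phi n f) : m + n ∈ Phi n f := by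
  obtain ⟨b, j, hle, rfl⟩ := hm
  by_cases hb : (b : ℕ) + 1 < k
  · refine ⟨⟨(b : ℕ) + 1, hb⟩, j, ?_, by push_cast; ring⟩
    exact le_trans (h1 b ⟨(b : ℕ)+1, hb⟩ (by simp [Fin.le_def])) hle
  · have hbk : (b : ℕ) + 1 = k := by have := b.2; omega
    refine ⟨⟨0, hk⟩, n + j, ?_, ?_⟩
    · have := h2 ⟨0, hk⟩ b
      omega
    · push_cast
      have : ((b : ℕ) + 1) * n = k * n := by rw [hbk]
      calc (b : ℕ) * n + j * k + n = ((b : ℕ) + 1) * n + j * k := by ring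
        _ = k * n + j * k := by rw [this]
        _ = 0 * n + (n + j) * k := by ring

lemma Phi_add_mem {f : Fin k → ℕ}
    (h1 : ∀ i j : Fin k, i ≤ j → f j ≤ f i) (h2 : ∀ i j : Fin k, f i ≤ f j + n)
    {m γ : ℕ} (hm : m ∈ Phi n f) (hγ : ∃ a b : ℕ, γ = a * k + b * n) :
    m + γ ∈ Phi n f := by
  obtain ⟨a, c, rfl⟩ := hγ
  have hka : ∀ a' (m' : ℕ), m' ∈ Phi n f → m' + a' * k ∈ Phi n f := by
    intro a'
    induction a' with
    | zero => intro m' h; simpa using h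
    | succ a' ih =>
      intro m' h
      have := Phi_add_k hk hn hkn (ih m' h)
      have e : m' + a' * k + k = m' + (a' + 1) * k := by ring
      rwa [e] at this
  have hnc : ∀ c' (m' : ℕ), m' ∈ Phi n f → m' + c' * n ∈ Phi n f := by
    intro c'
    induction c' with
    | zero => intro m' h; simpa using h
    | succ c' ih =>
      intro m' h
      have := Phi_add_n hk hn hkn h1 h2 (ih m' h)
      have e : m' + c' * n + n = m' + (c' + 1) * n := by ring
      rwa [e] at this
  have := hnc c (m + a * k) (hka a m hm)
  rwa [add_assoc] at this

open Finset in
/-- the complement finset -/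
lemma Gamma_sdiff_Phi {f : Fin k → ℕ} :
    {m : ℕ | ∃ a b : ℕ, m = a * k + b * n} \ Phi n f =
      ↑(((Finset.univ : Finset (Fin k)).sigma fun b => Finset.range (f b)).image
        (fun p => (p.1 : ℕ) * n + p.2 * k)) := by
  ext m
  simp only [Set.mem_diff, Set.mem_setOf_eq, Finset.coe_image, Set.mem_image,
    Finset.mem_coe, Finset.mem_sigma, Finset.mem_univ, Finset.mem_range, true_and]
  constructor
  · rintro ⟨hΓ, hΦ⟩
    obtain ⟨b, j, rfl⟩ := (mem_Gamma hk hn hkn).mp hΓ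
    have : ¬ f b ≤ j := fun h => hΦ ⟨b, j, h, rfl⟩
    exact ⟨⟨b, j⟩, show j < f b by omega, rfl⟩
  · rintro ⟨⟨b, j⟩, hj, rfl⟩
    have hj' : j < f b := hj
    refine ⟨(mem_Gamma hk hn hkn).mpr ⟨b, j, rfl⟩, ?_⟩
    intro hΦ
    have hΦ' : (b : ℕ) * n + j * k ∈ Phi n f := hΦ
    have := (mem_Phi hk hn hkn).mp hΦ'
    omega

open Finset in
lemma card_compl {f : Fin k → ℕ} :
    (((Finset.univ : Finset (Fin k)).sigma fun b => Finset.range (f b)).image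
        (fun p => (p.1 : ℕ) * n + p.2 * k)).card = ∑ b, f b := by
  rw [Finset.card_image_of_injOn, Finset.card_sigma]
  · simp
  · rintro ⟨b, j⟩ h1 ⟨b', j'⟩ h2 he
    obtain ⟨hb, hj⟩ := rep_unique hk hn hkn (by exact he)
    cases hb; cases hj; rfl

lemma Phi_injective {f g : Fin k → ℕ} (h : Phi n f = Phi n g) : f = g := by
  funext b
  have h1 : (b : ℕ) * n + f b * k ∈ Phi n g := h ▸ (mem_Phi hk hn hkn).mpr le_rfl
  have h2 : (b : ℕ) * n + g b * k ∈ Phi n f := h ▸ (mem_Phi hk hn hkn).mpr le_rfl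
  have := (mem_Phi hk hn hkn).mp h1
  have := (mem_Phi hk hn hkn).mp h2
  omega


lemma anti_of_succ {f : Fin k → ℕ}
    (h : ∀ (i : ℕ) (hi : i + 1 < k), f ⟨i + 1, hi⟩ ≤ f ⟨i, by omega⟩) :
    ∀ i j : Fin k, i ≤ j → f j ≤ f i := by
  have key : ∀ (d i : ℕ) (hd : i + d < k), f ⟨i + d, hd⟩ ≤ f ⟨i, by omega⟩ := by
    intro d
    induction d with
    | zero => intro i hd; exact le_rfl
    | succ d ih =>
      intro i hd
      exact le_trans (h (i + d) (by omega)) (ih i (by omega))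
  intro i j hij
  obtain ⟨iv, hiv⟩ := i
  obtain ⟨jv, hjv⟩ := j
  have hij' : iv ≤ jv := hij
  have hkey := key (jv - iv) iv (by omega)
  have e : (⟨jv, hjv⟩ : Fin k) = ⟨iv + (jv - iv), by omega⟩ := Fin.ext (by simp only [Fin.val_mk]; omega)
  exact le_trans (le_of_eq (congrArg f e)) hkey

lemma ideal_eq_Phi {Δ : Set ℕ}
    (hne : Δ.Nonempty) (hsub : Δ ⊆ {m : ℕ | ∃ a b : ℕ, m = a * k + b * n})
    (hcl : ∀ δ ∈ Δ, ∀ γ ∈ {m : ℕ | ∃ a b : ℕ, m = a * k + b * n}, δ + γ ∈ Δ) :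
    ∃ f : Fin k → ℕ, (∀ i j : Fin k, i ≤ j → f j ≤ f i) ∧
      (∀ i j : Fin k, f i ≤ f j + n) ∧ Δ = Phi n f := by
  have hex : ∀ b : Fin k, ∃ j : ℕ, (b : ℕ) * n + j * k ∈ Δ := by
    intro b
    obtain ⟨δ, hδ⟩ := hne
    obtain ⟨b₀, j₀, he⟩ := (mem_Gamma hk hn hkn).mp (hsub hδ)
    set c := (b : ℕ) + k - (b₀ : ℕ) with hc
    have hcn : c * n ∈ {m : ℕ | ∃ a b : ℕ, m = a * k + b * n} := ⟨0, c, by ring⟩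
    have hmem := hcl δ hδ _ hcn
    refine ⟨n + j₀, ?_⟩
    have hb₀ : (b₀ : ℕ) < k := b₀.2
    have e1 : (b₀ : ℕ) + c = (b : ℕ) + k := by omega
    have : δ + c * n = (b : ℕ) * n + (n + j₀) * k := by
      rw [he]
      calc (b₀ : ℕ) * n + j₀ * k + c * n = ((b₀ : ℕ) + c) * n + j₀ * k := by ring
        _ = ((b : ℕ) + k) * n + j₀ * k := by rw [e1]
        _ = (b : ℕ) * n + (n + j₀) * k := by ring
    rwa [this] at hmem
  classical
  set f : Fin k → ℕ := fun b => Nat.find (hex b) with hf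
  have hfmem : ∀ b : Fin k, (b : ℕ) * n + f b * k ∈ Δ := fun b => Nat.find_spec (hex b)
  have hfmin : ∀ (b : Fin k) (j : ℕ), (b : ℕ) * n + j * k ∈ Δ → f b ≤ j :=
    fun b j h => Nat.find_min' (hex b) h
  have hkΓ : (k : ℕ) ∈ {m : ℕ | ∃ a b : ℕ, m = a * k + b * n} := ⟨1, 0, by ring⟩
  have hnΓ : (n : ℕ) ∈ {m : ℕ | ∃ a b : ℕ, m = a * k + b * n} := ⟨0, 1, by ring⟩
  have hsucc : ∀ (i : ℕ) (hi : i + 1 < k), f ⟨i + 1, hi⟩ ≤ f ⟨i, by omega⟩ := by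
    intro i hi
    have h1 := hcl _ (hfmem ⟨i, by omega⟩) _ hnΓ
    have e : (((⟨i, by omega⟩ : Fin k) : ℕ)) * n + f ⟨i, by omega⟩ * k + n
        = (((⟨i + 1, hi⟩ : Fin k) : ℕ)) * n + f ⟨i, by omega⟩ * k := by
      simp only [Fin.val_mk]; ring
    rw [e] at h1
    exact hfmin _ _ h1
  have hanti := anti_of_succ hk hn hkn hsucc
  have hwrap0 : f ⟨0, hk⟩ ≤ f ⟨k - 1, by omega⟩ + n := by
    have h1 := hcl _ (hfmem ⟨k - 1, by omega⟩) _ hnΓ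
    have e : (((⟨k - 1, by omega⟩ : Fin k) : ℕ)) * n + f ⟨k - 1, by omega⟩ * k + n
        = (((⟨0, hk⟩ : Fin k) : ℕ)) * n + (n + f ⟨k - 1, by omega⟩) * k := by
      simp only [Fin.val_mk]
      have e3 : ((k : ℕ) - 1 + 1) * n = k * n := by
        rw [show (k : ℕ) - 1 + 1 = k from by omega]
      calc (k - 1) * n + f ⟨k - 1, by omega⟩ * k + n
          = ((k - 1) + 1) * n + f ⟨k - 1, by omega⟩ * k := by ring
        _ = k * n + f ⟨k - 1, by omega⟩ * k := by rw [e3]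
        _ = 0 * n + (n + f ⟨k - 1, by omega⟩) * k := by ring
    rw [e] at h1
    have := hfmin _ _ h1
    omega
  have hwrap : ∀ i j : Fin k, f i ≤ f j + n := by
    intro i j
    have h1 : f i ≤ f ⟨0, hk⟩ := hanti ⟨0, hk⟩ i (by exact Nat.zero_le _)
    have h2 : f ⟨k - 1, by omega⟩ ≤ f j := hanti j ⟨k - 1, by omega⟩ (by
      have := j.2; exact Nat.le_sub_one_of_lt (by omega) |>.trans (le_refl _))
    omega
  refine ⟨f, hanti, hwrap, ?_⟩
  apply Set.eq_of_subset_of_subset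
  · intro δ hδ
    obtain ⟨b, j, rfl⟩ := (mem_Gamma hk hn hkn).mp (hsub hδ)
    exact ⟨b, j, hfmin b j hδ, rfl⟩
  · rintro m ⟨b, j, hle, rfl⟩
    have h1 := hcl _ (hfmem b) _ (⟨j - f b, 0, by ring⟩ :
      (j - f b) * k ∈ {m : ℕ | ∃ a b : ℕ, m = a * k + b * n})
    have e : (b : ℕ) * n + f b * k + (j - f b) * k = (b : ℕ) * n + j * k := by
      have : f b + (j - f b) = j := by omega
      calc (b : ℕ) * n + f b * k + (j - f b) * k
          = (b : ℕ) * n + (f b + (j - f b)) * k := by ring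
        _ = (b : ℕ) * n + j * k := by rw [this]
    rwa [e] at h1
  
end Ideals


open Classical in
lemma count_ideals (k n : ℕ) (hk : 0 < k) (hn : 0 < n) (hkn : Nat.Coprime k n) (l : ℕ) :
    {Δ : Set ℕ |
      (Δ.Nonempty ∧ Δ ⊆ {m : ℕ | ∃ a b : ℕ, m = a * k + b * n} ∧
        ∀ δ ∈ Δ, ∀ γ ∈ {m : ℕ | ∃ a b : ℕ, m = a * k + b * n}, δ + γ ∈ Δ) ∧
      ({m : ℕ | ∃ a b : ℕ, m = a * k + b * n} \ Δ).ncard = l}.ncard = (idT k n l).card := by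
  have hset : {Δ : Set ℕ |
      (Δ.Nonempty ∧ Δ ⊆ {m : ℕ | ∃ a b : ℕ, m = a * k + b * n} ∧
        ∀ δ ∈ Δ, ∀ γ ∈ {m : ℕ | ∃ a b : ℕ, m = a * k + b * n}, δ + γ ∈ Δ) ∧
      ({m : ℕ | ∃ a b : ℕ, m = a * k + b * n} \ Δ).ncard = l}
      = Phi n '' (↑(idT k n l) : Set (Fin k → ℕ)) := by
    ext Δ
    simp only [Set.mem_setOf_eq, Set.mem_image, Finset.mem_coe]
    constructor
    · rintro ⟨⟨hne, hsub, hcl⟩, hcol⟩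
      obtain ⟨f, h1, h2, rfl⟩ := ideal_eq_Phi hk hn hkn hne hsub hcl
      refine ⟨f, mem_idT.mpr ⟨h1, h2, ?_⟩, rfl⟩
      rw [Gamma_sdiff_Phi hk hn hkn, Set.ncard_coe_finset, card_compl hk hn hkn] at hcol
      exact hcol
    · rintro ⟨f, hf, rfl⟩
      obtain ⟨h1, h2, h3⟩ := mem_idT.mp hf
      refine ⟨⟨Phi_nonempty hk hn hkn, Phi_subset hk hn hkn, ?_⟩, ?_⟩
      · intro δ hδ γ hγ
        exact Phi_add_mem hk hn hkn h1 h2 hδ hγ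
      · rw [Gamma_sdiff_Phi hk hn hkn, Set.ncard_coe_finset, card_compl hk hn hkn]
        exact h3
  rw [hset, Set.ncard_image_of_injOn (fun f _ g _ h => Phi_injective hk hn hkn h),
    Set.ncard_coe_finset]


/-- For coprime positive `k, n` and `Γ = ⟨k,n⟩`, letting `N_l` be the number of
semigroup ideals of `Γ` of colength `l`, one has
`(1 − q^{k+n}) Σ_l N_l q^l = binom(k+n, k)_q` in `ℤ[[q]]`. -/
theorem generating_function_ideals_eq_gaussBinom (k n : ℕ) (hk : 0 < k) (hn : 0 < n)
    (hkn : Nat.Coprime k n)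
    (Γ : Set ℕ) (hΓ : Γ = {m : ℕ | ∃ a b : ℕ, m = a * k + b * n})
    (N : ℕ → ℕ)
    (hN : ∀ l, N l = Set.ncard {Δ : Set ℕ |
      (Δ.Nonempty ∧ Δ ⊆ Γ ∧ ∀ δ ∈ Δ, ∀ γ ∈ Γ, δ + γ ∈ Δ) ∧ (Γ \ Δ).ncard = l}) :
    (1 - PowerSeries.X ^ (k + n)) * PowerSeries.mk (fun l => (N l : ℤ)) =
      gaussBinom (k + n) k := by
  subst hΓ
  have hNc : ∀ l, N l = (idT k n l).card := by
    intro l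
    rw [hN l, ← count_ideals k n hk hn hkn l]
  have hmk : PowerSeries.mk (fun l => (N l : ℤ))
      = PowerSeries.mk (fun l => ((idT k n l).card : ℤ)) := by
    have e : (fun l => ((N l : ℤ))) = fun l => ((idT k n l).card : ℤ) :=
      funext fun l => by rw [hNc l]
    rw [e]
  rw [hmk]
  set S : PowerSeries ℤ := PowerSeries.mk (fun l => ((idT k n l).card : ℤ)) with hSdef
  apply assemble k n hk
  -- (1 - X^k) * S = Pbox (k-1) n
  obtain ⟨k', rfl⟩ : ∃ k', k = k' + 1 := ⟨k - 1, by omega⟩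
  have hrec : S = Pbox k' n + (PowerSeries.X : PowerSeries ℤ)^(k'+1) * S := by
    rw [hSdef, Pbox, X_pow_mul_mk]
    ext l
    simp only [PowerSeries.coeff_mk, map_add, idT_rec k' n l]
    push_cast
    split <;> simp
  rw [show k' + 1 - 1 = k' from rfl]
  linear_combination hrec
end

section
/- Let k and n be coprime positive integers, let Γ = {ak + bn : a, b ∈ ℕ}, and define G(q, a) = Σ_{Δ} q^{c(Δ)} (1 − a)^{m(Δ)} ∈ (ℤ[a])[[q]], the sum over all semigroup ideals Δ of Γ, where c(Δ) is the colength and m(Δ) the minimal number of generators of Δ. Then (1 − q^k) · G(q, a) equals the coefficient of ξ^n in the product ∏_{i=0}^{k−1} (1 + (1 − a) · Σ_{m ≥ 1} ξ^m q^{im}), the product being expanded in the power series ring (ℤ[a][[q]])[[ξ]] and the coefficient of ξ^n being an element of ℤ[a][[q]]. -/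
/-- The minimal number of generators of a semigroup ideal `Δ` of a numerical semigroup
`Γ ⊆ ℕ`: the least `r` such that `Δ = (a₁ + Γ) ∪ ⋯ ∪ (a_r + Γ)` for some `a_j ∈ Δ`. -/
noncomputable def semigroupIdealMinGens (Γ Δ : Set ℕ) : ℕ :=
  sInf {r : ℕ | ∃ a : Fin r → ℕ, (∀ j, a j ∈ Δ) ∧ Δ = ⋃ j, ((a j + ·) '' Γ)}

/-- A semigroup ideal of `Γ`: a nonempty subset `Δ ⊆ Γ` with `Δ + Γ ⊆ Δ`. -/
def IsSemigroupIdeal (Γ Δ : Set ℕ) : Prop :=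
  Δ.Nonempty ∧ Δ ⊆ Γ ∧ ∀ δ ∈ Δ, ∀ γ ∈ Γ, δ + γ ∈ Δ

namespace StaircaseAux

def Gam (k n : ℕ) : Set ℕ := {m : ℕ | ∃ a b : ℕ, m = a * k + b * n}

def cpred {k : ℕ} (i : Fin k) : Fin k :=
  ⟨(i.val + (k - 1)) % k, Nat.mod_lt _ (Nat.lt_of_le_of_lt (Nat.zero_le _) i.isLt)⟩

def wgt {k : ℕ} (n : ℕ) (i : Fin k) : ℕ := if i.val = 0 then n else 0

def Valid {k : ℕ} (n : ℕ) (x : Fin k → ℕ) : Prop :=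
  ∀ i : Fin k, x i ≤ x (cpred i) + wgt n i

def Dset (k n : ℕ) (x : Fin k → ℕ) : Set ℕ :=
  {m | ∃ i : Fin k, ∃ t : ℕ, m = x i * k + i.val * n + t * k}

variable {k n : ℕ}

lemma cpred_val_of_eq_zero (i : Fin k) (h : i.val = 0) : (cpred i).val = k - 1 := by
  have hk : 0 < k := Nat.lt_of_le_of_lt (Nat.zero_le _) i.isLt
  simp only [cpred, h, Nat.zero_add]
  exact Nat.mod_eq_of_lt (by omega)

lemma cpred_val_of_ne_zero (i : Fin k) (h : i.val ≠ 0) : (cpred i).val = i.val - 1 := by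
  have hk : i.val < k := i.isLt
  have h2 : i.val + (k - 1) = (i.val - 1) + 1 * k := by omega
  simp only [cpred, h2, Nat.add_mul_mod_self_right]
  exact Nat.mod_eq_of_lt (by omega)

lemma class_eq (hkn : Nat.Coprime k n) {i j : Fin k} {t s : ℕ}
    (h : i.val * n + t * k = j.val * n + s * k) : i = j ∧ t = s := by
  have hk : 0 < k := Nat.lt_of_le_of_lt (Nat.zero_le _) i.isLt
  have hmod : (i.val * n) % k = (j.val * n) % k := by
    have h1 : (i.val * n + t * k) % k = (i.val * n) % k := Nat.add_mul_mod_self_right ..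
    have h2 : (j.val * n + s * k) % k = (j.val * n) % k := Nat.add_mul_mod_self_right ..
    rw [← h1, ← h2, h]
  have hij : i = j := by
    have h3 : i.val % k = j.val % k :=
      (Nat.ModEq.cancel_right_of_coprime (by simpa [Nat.coprime_comm] using hkn) hmod)
    exact Fin.ext (by rwa [Nat.mod_eq_of_lt i.isLt, Nat.mod_eq_of_lt j.isLt] at h3)
  refine ⟨hij, ?_⟩
  subst hij
  have h4 : t * k = s * k := by omega
  exact Nat.eq_of_mul_eq_mul_right hk h4

lemma mem_Gam_iff (hk : 0 < k) {m : ℕ} :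
    m ∈ Gam k n ↔ ∃ i : Fin k, ∃ t : ℕ, m = i.val * n + t * k := by
  constructor
  · rintro ⟨a, b, rfl⟩
    refine ⟨⟨b % k, Nat.mod_lt _ hk⟩, a + (b / k) * n, ?_⟩
    have hb : b = k * (b / k) + b % k := (Nat.div_add_mod b k).symm
    calc a * k + b * n = a * k + (k * (b / k) + b % k) * n := by rw [← hb]
    _ = (b % k) * n + (a + b / k * n) * k := by ring
  · rintro ⟨i, t, rfl⟩
    exact ⟨t, i.val, by ring⟩

lemma cseq_mem_Dset (x : Fin k → ℕ) (i : Fin k) : x i * k + i.val * n ∈ Dset k n x :=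
  ⟨i, 0, by ring⟩

lemma Dset_add_k {x : Fin k → ℕ} {m : ℕ} (hm : m ∈ Dset k n x) : m + k ∈ Dset k n x := by
  obtain ⟨i, t, rfl⟩ := hm
  exact ⟨i, t + 1, by ring⟩

lemma Dset_add_n {x : Fin k → ℕ} (hx : Valid n x) {m : ℕ} (hm : m ∈ Dset k n x) :
    m + n ∈ Dset k n x := by
  obtain ⟨i, t, rfl⟩ := hm
  by_cases hi : i.val + 1 < k
  · refine ⟨⟨i.val + 1, hi⟩, (x i - x ⟨i.val + 1, hi⟩) + t, ?_⟩
    have hcp : cpred (⟨i.val + 1, hi⟩ : Fin k) = i := by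
      apply Fin.ext
      rw [cpred_val_of_ne_zero _ (by simp)]
      simp
    have hle : x ⟨i.val + 1, hi⟩ ≤ x i := by
      have h := hx ⟨i.val + 1, hi⟩
      rw [hcp] at h
      simpa [wgt] using h
    have e1 : x i * k = x ⟨i.val + 1, hi⟩ * k + (x i - x ⟨i.val + 1, hi⟩) * k := by
      rw [← Nat.add_mul, Nat.add_sub_cancel' hle]
    have e2 : ((x i - x ⟨i.val + 1, hi⟩) + t) * k
        = (x i - x ⟨i.val + 1, hi⟩) * k + t * k := by ring
    have e3 : ((⟨i.val + 1, hi⟩ : Fin k)).val * n = i.val * n + n := by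
      show (i.val + 1) * n = i.val * n + n
      ring
    omega
  · have hiv : i.val = k - 1 := by have := i.isLt; omega
    have hk : 0 < k := Nat.lt_of_le_of_lt (Nat.zero_le _) i.isLt
    refine ⟨⟨0, hk⟩, (x i + n - x ⟨0, hk⟩) + t, ?_⟩
    have hcp : cpred (⟨0, hk⟩ : Fin k) = i := by
      apply Fin.ext
      rw [cpred_val_of_eq_zero _ rfl, hiv]
    have hle : x ⟨0, hk⟩ ≤ x i + n := by
      have h := hx ⟨0, hk⟩
      rw [hcp] at h
      simpa [wgt] using h
    have e1 : (x i + n) * k = x ⟨0, hk⟩ * k + (x i + n - x ⟨0, hk⟩) * k := by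
      rw [← Nat.add_mul, Nat.add_sub_cancel' hle]
    have e2 : ((x i + n - x ⟨0, hk⟩) + t) * k = (x i + n - x ⟨0, hk⟩) * k + t * k := by ring
    have e3 : (x i + n) * k = x i * k + n * k := by ring
    have e4 : i.val * n + n = n * k := by
      rw [hiv]
      have : (k - 1) + 1 = k := by omega
      calc (k - 1) * n + n = ((k - 1) + 1) * n := by ring
      _ = n * k := by rw [this]; ring
    have e5 : ((⟨0, hk⟩ : Fin k)).val * n = 0 := by simp
    omega

lemma Dset_subset_Gam (x : Fin k → ℕ) : Dset k n x ⊆ Gam k n := by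
  rintro m ⟨i, t, rfl⟩
  exact ⟨x i + t, i.val, by ring⟩

theorem isSemigroupIdeal_Dset (hk : 0 < k) {x : Fin k → ℕ} (hx : Valid n x) :
    (Dset k n x).Nonempty ∧ Dset k n x ⊆ Gam k n ∧
      ∀ δ ∈ Dset k n x, ∀ γ ∈ Gam k n, δ + γ ∈ Dset k n x := by
  refine ⟨⟨_, cseq_mem_Dset x ⟨0, hk⟩⟩, Dset_subset_Gam x, ?_⟩
  rintro δ hδ γ ⟨a, b, rfl⟩
  have hb : ∀ bb, ∀ m ∈ Dset k n x, m + bb * n ∈ Dset k n x := by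
    intro bb
    induction bb with
    | zero => simp
    | succ c ih =>
      intro m hm
      have h := Dset_add_n hx (ih m hm)
      have he : m + (c + 1) * n = m + c * n + n := by ring
      rwa [he]
  have ha : ∀ aa, ∀ m ∈ Dset k n x, m + aa * k ∈ Dset k n x := by
    intro aa
    induction aa with
    | zero => simp
    | succ c ih =>
      intro m hm
      have h := Dset_add_k (ih m hm)
      have he : m + (c + 1) * k = m + c * k + k := by ring
      rwa [he]
  have h := hb b _ (ha a _ hδ)
  rwa [add_assoc] at h

lemma mem_Dset_iff {x : Fin k → ℕ} {m : ℕ} :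
    m ∈ Dset k n x ↔ ∃ i : Fin k, ∃ t : ℕ, x i ≤ t ∧ m = i.val * n + t * k := by
  constructor
  · rintro ⟨i, t, rfl⟩
    exact ⟨i, x i + t, Nat.le_add_right _ _, by ring⟩
  · rintro ⟨i, t, ht, rfl⟩
    exact ⟨i, t - x i, by have := Nat.sub_add_cancel ht; nlinarith⟩

lemma Dset_injective (hkn : Nat.Coprime k n) {x y : Fin k → ℕ}
    (h : Dset k n x = Dset k n y) : x = y := by
  have key : ∀ (x y : Fin k → ℕ), Dset k n x = Dset k n y → ∀ i, y i ≤ x i := by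
    intro x y h i
    have hm : (i.val * n + x i * k) ∈ Dset k n y := by
      rw [← h, mem_Dset_iff]
      exact ⟨i, x i, le_rfl, rfl⟩
    rw [mem_Dset_iff] at hm
    obtain ⟨j, t, ht, hm2⟩ := hm
    obtain ⟨hij, hts⟩ := class_eq hkn hm2.symm
    subst hij
    omega
  funext i
  exact le_antisymm (key y x h.symm i) (key x y h i)

/-- every semigroup ideal of `Gam k n` is `Dset k n x` for a valid `x` -/
lemma ideal_eq_Dset (hk : 0 < k) (hkn : Nat.Coprime k n) {Δ : Set ℕ}
    (hne : Δ.Nonempty) (hsub : Δ ⊆ Gam k n)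
    (hcl : ∀ δ ∈ Δ, ∀ γ ∈ Gam k n, δ + γ ∈ Δ) :
    ∃ x : Fin k → ℕ, Valid n x ∧ Δ = Dset k n x := by
  classical
  set C : Fin k → Set ℕ := fun i => {t | i.val * n + t * k ∈ Δ} with hC
  have hCup : ∀ i : Fin k, ∀ t ∈ C i, ∀ s, t ≤ s → s ∈ C i := by
    intro i t ht s hts
    induction s, hts using Nat.le_induction with
    | base => exact ht
    | succ m hm ih =>
      have h2 := hcl _ ih k ⟨1, 0, by ring⟩
      have he : i.val * n + m * k + k = i.val * n + (m + 1) * k := by ring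
      rwa [he] at h2
  have hCne : ∀ i : Fin k, (C i).Nonempty := by
    intro i
    obtain ⟨δ, hδ⟩ := hne
    obtain ⟨d, s, hds⟩ := (mem_Gam_iff hk).mp (hsub hδ)
    refine ⟨s + n, ?_⟩
    have hu : (i.val + k - d.val) * n ∈ Gam k n := ⟨0, _, by ring⟩
    have h2 := hcl _ hδ _ hu
    have he : δ + (i.val + k - d.val) * n = i.val * n + (s + n) * k := by
      rw [hds]
      have hd : d.val ≤ k := le_of_lt d.isLt
      have : d.val + (i.val + k - d.val) = i.val + k := by omega
      calc d.val * n + s * k + (i.val + k - d.val) * n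
          = (d.val + (i.val + k - d.val)) * n + s * k := by ring
        _ = (i.val + k) * n + s * k := by rw [this]
        _ = i.val * n + (s + n) * k := by ring
    rwa [he] at h2
  set x : Fin k → ℕ := fun i => sInf (C i) with hx
  have hmem : ∀ i, x i ∈ C i := fun i => Nat.sInf_mem (hCne i)
  have hmemiff : ∀ i t, t ∈ C i ↔ x i ≤ t := by
    intro i t
    exact ⟨fun ht => Nat.sInf_le ht, fun ht => hCup i _ (hmem i) t ht⟩
  refine ⟨x, ?_, ?_⟩
  · intro j
    set i := cpred j with hi
    have hb : i.val * n + x i * k ∈ Δ := hmem i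
    have hbn := hcl _ hb n ⟨0, 1, by ring⟩
    by_cases hj : j.val = 0
    · have hiv : i.val = k - 1 := cpred_val_of_eq_zero j hj
      have he : i.val * n + x i * k + n = j.val * n + (x i + n) * k := by
        rw [hiv, hj]
        have h1 : (k - 1) + 1 = k := by omega
        calc (k - 1) * n + x i * k + n = ((k - 1) + 1) * n + x i * k := by ring
          _ = k * n + x i * k := by rw [h1]
          _ = 0 * n + (x i + n) * k := by ring
      rw [he] at hbn
      have := (hmemiff j _).mp hbn
      simp only [wgt, hj, if_true]
      omega
    · have hiv : i.val = j.val - 1 := cpred_val_of_ne_zero j hj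
      have he : i.val * n + x i * k + n = j.val * n + x i * k := by
        have h1 : i.val + 1 = j.val := by
          have := j.isLt
          omega
        calc i.val * n + x i * k + n = (i.val + 1) * n + x i * k := by ring
          _ = j.val * n + x i * k := by rw [h1]
      rw [he] at hbn
      have := (hmemiff j _).mp hbn
      simp only [wgt, hj, if_false]
      omega
  · ext m
    rw [mem_Dset_iff]
    constructor
    · intro hm
      obtain ⟨i, t, hit⟩ := (mem_Gam_iff hk).mp (hsub hm)
      refine ⟨i, t, ?_, hit⟩
      exact (hmemiff i t).mp (by rw [hC]; simp only [Set.mem_setOf_eq, ← hit]; exact hm)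
    · rintro ⟨i, t, ht, rfl⟩
      exact (hmemiff i t).mpr ht

lemma not_mem_Dset (hkn : Nat.Coprime k n) {x : Fin k → ℕ} {i : Fin k} {t : ℕ}
    (ht : t < x i) : i.val * n + t * k ∉ Dset k n x := by
  rw [mem_Dset_iff]
  rintro ⟨j, s, hs, hm⟩
  obtain ⟨hij, hts⟩ := class_eq hkn hm
  subst hij; omega

lemma colength_Dset (hk : 0 < k) (hkn : Nat.Coprime k n) (x : Fin k → ℕ) :
    (Gam k n \ Dset k n x).ncard = ∑ i, x i := by
  classical
  set F : Finset (Fin k × ℕ) := Finset.univ.biUnion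
    (fun i : Fin k => {i} ×ˢ Finset.range (x i)) with hF
  have hmemF : ∀ p : Fin k × ℕ, p ∈ F ↔ p.2 < x p.1 := by
    intro p
    simp only [hF, Finset.mem_biUnion, Finset.mem_univ, true_and, Finset.mem_product,
      Finset.mem_singleton, Finset.mem_range]
    constructor
    · rintro ⟨i, hi1, hi2⟩
      rwa [hi1]
    · intro hp
      exact ⟨p.1, rfl, hp⟩
  have hE : Gam k n \ Dset k n x =
      (fun p : Fin k × ℕ => p.1.val * n + p.2 * k) '' ↑F := by
    ext m
    simp only [Set.mem_diff, Set.mem_image, Finset.coe_sort_coe, Finset.mem_coe]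
    constructor
    · rintro ⟨hmG, hmD⟩
      obtain ⟨i, t, rfl⟩ := (mem_Gam_iff hk).mp hmG
      have ht : t < x i := by
        by_contra hcon
        exact hmD (mem_Dset_iff.mpr ⟨i, t, by omega, rfl⟩)
      exact ⟨(i, t), (hmemF _).mpr ht, rfl⟩
    · rintro ⟨⟨i, t⟩, hp, rfl⟩
      have ht : t < x i := (hmemF _).mp hp
      exact ⟨(mem_Gam_iff hk).mpr ⟨i, t, rfl⟩, not_mem_Dset hkn ht⟩
  rw [hE]
  have hinj : Set.InjOn (fun p : Fin k × ℕ => p.1.val * n + p.2 * k) ↑F := by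
    rintro ⟨i, t⟩ _ ⟨j, s⟩ _ h
    obtain ⟨hij, hts⟩ := class_eq hkn h
    simp_all
  rw [Set.ncard_image_of_injOn hinj, Set.ncard_coe_finset]
  rw [hF, Finset.card_biUnion]
  · apply Finset.sum_congr rfl
    intro i _
    rw [Finset.card_product, Finset.card_singleton, Finset.card_range, one_mul]
  · intro i _ j _ hij
    rw [Function.onFun, Finset.disjoint_left]
    rintro ⟨a, b⟩ ha hb
    simp only [Finset.mem_product, Finset.mem_singleton] at ha hb
    exact hij (ha.1 ▸ hb.1 ▸ rfl)

def DsF (n : ℕ) (x : Fin k → ℕ) : Finset (Fin k) :=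
  Finset.univ.filter (fun i : Fin k => x i < x (cpred i) + wgt n i)

def str (n : ℕ) (x : Fin k → ℕ) : ℕ := (DsF n x).card

lemma Gam_add {γ γ' : ℕ} (h : γ ∈ Gam k n) (h' : γ' ∈ Gam k n) : γ + γ' ∈ Gam k n := by
  obtain ⟨a, b, rfl⟩ := h
  obtain ⟨a', b', rfl⟩ := h'
  exact ⟨a + a', b + b', by ring⟩

lemma zero_mem_Gam : (0 : ℕ) ∈ Gam k n := ⟨0, 0, by ring⟩

lemma n_mem_Gam : n ∈ Gam k n := ⟨0, 1, by ring⟩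

lemma k_mem_Gam : k ∈ Gam k n := ⟨1, 0, by ring⟩

/-- from any index one reaches a descent index going backwards, along `Gam`-shifts -/
lemma reach_descent (hn : 0 < n) {x : Fin k → ℕ} (hx : Valid n x) :
    ∀ N : ℕ, ∀ i : Fin k, x i * k + i.val * n = N →
      ∃ d, d ∈ DsF n x ∧ ∃ γ ∈ Gam k n,
        x d * k + d.val * n + γ = x i * k + i.val * n := by
  intro N
  induction N using Nat.strong_induction_on with
  | _ N ih =>
    intro i hi
    by_cases hd : x i < x (cpred i) + wgt n i
    · refine ⟨i, by simp [DsF, hd], 0, zero_mem_Gam, by ring⟩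
    · have heq : x i = x (cpred i) + wgt n i := le_antisymm (hx i) (not_lt.mp hd)
      have hstep : x (cpred i) * k + (cpred i).val * n + n = x i * k + i.val * n := by
        by_cases hiz : i.val = 0
        · have hpv : (cpred i).val = k - 1 := cpred_val_of_eq_zero i hiz
          have hwgt : wgt n i = n := by simp [wgt, hiz]
          have hk : 0 < k := Nat.lt_of_le_of_lt (Nat.zero_le _) i.isLt
          have e1 : (k - 1) * n + n = n * k := by
            have h1 : (k - 1) + 1 = k := by omega
            calc (k - 1) * n + n = ((k - 1) + 1) * n := by ring
            _ = n * k := by rw [h1]; ring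
          have e2 : (x (cpred i) + n) * k = x (cpred i) * k + n * k := by ring
          rw [heq, hwgt, hpv, hiz]
          omega
        · have hpv : (cpred i).val = i.val - 1 := cpred_val_of_ne_zero i hiz
          have hwgt : wgt n i = 0 := by simp [wgt, hiz]
          have e1 : (i.val - 1) * n + n = i.val * n := by
            have h1 : (i.val - 1) + 1 = i.val := by omega
            calc (i.val - 1) * n + n = ((i.val - 1) + 1) * n := by ring
            _ = i.val * n := by rw [h1]
          rw [hwgt] at heq
          have heq' : x i = x (cpred i) := by omega
          rw [heq', hpv]
          omega
      have hlt : x (cpred i) * k + (cpred i).val * n < N := by omega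
      obtain ⟨d, hdd, γ, hγ, hsum⟩ := ih _ hlt (cpred i) rfl
      exact ⟨d, hdd, γ + n, Gam_add hγ n_mem_Gam, by omega⟩

lemma add_k_ne_cseq (hkn : Nat.Coprime k n) {x : Fin k → ℕ} {m : ℕ}
    (hm : m ∈ Dset k n x) (d : Fin k) : m + k ≠ x d * k + d.val * n := by
  obtain ⟨j, t, rfl⟩ := hm
  intro h
  have e : (x j + t + 1) * k = x j * k + t * k + k := by ring
  have h2 : j.val * n + (x j + t + 1) * k = d.val * n + x d * k := by omega
  obtain ⟨hjd, ht⟩ := class_eq hkn h2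
  subst hjd
  omega

lemma add_n_ne_cseq (hkn : Nat.Coprime k n) {x : Fin k → ℕ} {m : ℕ}
    (hm : m ∈ Dset k n x) {d : Fin k} (hd : x d < x (cpred d) + wgt n d) :
    m + n ≠ x d * k + d.val * n := by
  obtain ⟨j, t, rfl⟩ := hm
  intro h
  by_cases hj : j.val + 1 < k
  · set i : Fin k := ⟨j.val + 1, hj⟩ with hi
    have hiv : i.val = j.val + 1 := rfl
    have e : i.val * n + (x j + t) * k = x j * k + j.val * n + t * k + n := by
      rw [hiv]; ring
    have h2 : i.val * n + (x j + t) * k = d.val * n + x d * k := by omega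
    obtain ⟨hid, ht⟩ := class_eq hkn h2
    have hcp : cpred d = j := by
      apply Fin.ext
      rw [← hid, cpred_val_of_ne_zero i (by rw [hiv]; omega), hiv]
      omega
    have hwz : wgt n d = 0 := by
      simp [wgt, ← hid, hiv]
    rw [hcp, hwz] at hd
    omega
  · have hjv : j.val = k - 1 := by have := j.isLt; omega
    have hk : 0 < k := Nat.lt_of_le_of_lt (Nat.zero_le _) j.isLt
    set i : Fin k := ⟨0, hk⟩ with hi
    have e : (k - 1) * n + n = n * k := by
      have h1 : (k - 1) + 1 = k := by omega
      calc (k - 1) * n + n = ((k - 1) + 1) * n := by ring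
      _ = n * k := by rw [h1]; ring
    have e2 : (x j + t + n) * k = x j * k + t * k + n * k := by ring
    have h2 : i.val * n + (x j + t + n) * k = d.val * n + x d * k := by
      show 0 * n + (x j + t + n) * k = d.val * n + x d * k
      have e3 : j.val * n = (k - 1) * n := by rw [hjv]
      omega
    obtain ⟨hid, ht⟩ := class_eq hkn h2
    have hdz : d.val = 0 := by rw [← hid]
    have hcp : cpred d = j := by
      apply Fin.ext
      rw [cpred_val_of_eq_zero d hdz, hjv]
    have hwz : wgt n d = n := by simp [wgt, hdz]
    rw [hcp, hwz] at hd
    omega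

lemma Dset_add_Gam (hk : 0 < k) {x : Fin k → ℕ} (hx : Valid n x) {m γ : ℕ}
    (hm : m ∈ Dset k n x) (hγ : γ ∈ Gam k n) : m + γ ∈ Dset k n x :=
  (isSemigroupIdeal_Dset hk hx).2.2 m hm γ hγ

theorem minGens_Dset (hk : 0 < k) (hn : 0 < n) (hkn : Nat.Coprime k n)
    {x : Fin k → ℕ} (hx : Valid n x) :
    semigroupIdealMinGens (Gam k n) (Dset k n x) = str n x := by
  classical
  set S : Set ℕ := {r : ℕ | ∃ a : Fin r → ℕ, (∀ j, a j ∈ Dset k n x) ∧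
    Dset k n x = ⋃ j, ((a j + ·) '' Gam k n)} with hS
  have hmemS : str n x ∈ S := by
    set e := (DsF n x).equivFin with he
    refine ⟨fun j => x (e.symm j).val * k + ((e.symm j).val).val * n,
      fun j => cseq_mem_Dset x _, ?_⟩
    ext m
    simp only [Set.mem_iUnion, Set.mem_image]
    constructor
    · rintro ⟨i, t, rfl⟩
      obtain ⟨d, hdd, γ, hγ, hsum⟩ := reach_descent hn hx _ i rfl
      refine ⟨e ⟨d, hdd⟩, γ + t * k, Gam_add hγ ⟨t, 0, by ring⟩, ?_⟩
      have hsymm : e.symm (e ⟨d, hdd⟩) = ⟨d, hdd⟩ := Equiv.symm_apply_apply e _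
      rw [hsymm]
      simp only []
      omega
    · rintro ⟨j, γ, hγ, rfl⟩
      exact Dset_add_Gam hk hx (cseq_mem_Dset x _) hγ
  have hlb : ∀ r ∈ S, str n x ≤ r := by
    rintro r ⟨a, ha1, ha2⟩
    have claim : ∀ d : Fin k, d ∈ DsF n x →
        ∃ j : Fin r, a j = x d * k + d.val * n := by
      intro d hd
      have hdd : x d < x (cpred d) + wgt n d := by
        simpa [DsF] using hd
      have hc : x d * k + d.val * n ∈ Dset k n x := cseq_mem_Dset x d
      rw [ha2] at hc
      obtain ⟨j, γ, hγ, hsum⟩ := Set.mem_iUnion.mp hc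
      obtain ⟨u, v, rfl⟩ := hγ
      have hsum2 : a j + (u * k + v * n) = x d * k + d.val * n := hsum
      clear hsum
      rcases Nat.eq_zero_or_pos u with hu | hu
      · rcases Nat.eq_zero_or_pos v with hv | hv
        · subst hu; subst hv
          refine ⟨j, ?_⟩
          simpa using hsum2
        · exfalso
          have hm : a j + (v - 1) * n ∈ Dset k n x :=
            Dset_add_Gam hk hx (ha1 j) ⟨0, v - 1, by ring⟩
          refine add_n_ne_cseq hkn hm hdd ?_
          have : (v - 1) * n + n = v * n := by
            have h1 : (v - 1) + 1 = v := by omega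
            calc (v - 1) * n + n = ((v - 1) + 1) * n := by ring
            _ = v * n := by rw [h1]
          subst hu
          simp only [Nat.zero_mul, Nat.zero_add] at hsum2
          omega
      · exfalso
        have hm : a j + ((u - 1) * k + v * n) ∈ Dset k n x :=
          Dset_add_Gam hk hx (ha1 j) ⟨u - 1, v, rfl⟩
        refine add_k_ne_cseq hkn hm d ?_
        have : (u - 1) * k + k = u * k := by
          have h1 : (u - 1) + 1 = u := by omega
          calc (u - 1) * k + k = ((u - 1) + 1) * k := by ring
          _ = u * k := by rw [h1]
        omega
    set ψ : {d // d ∈ DsF n x} → Fin r := fun d => Classical.choose (claim d.1 d.2) with hψ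
    have hinj : Function.Injective ψ := by
      rintro ⟨d, hd⟩ ⟨d', hd'⟩ h
      have h1 := Classical.choose_spec (claim d hd)
      have h2 := Classical.choose_spec (claim d' hd')
      have h3 : x d * k + d.val * n = x d' * k + d'.val * n := by
        rw [← h1, ← h2]
        exact congrArg a h
      have h4 : d.val * n + x d * k = d'.val * n + x d' * k := by omega
      exact Subtype.ext (class_eq hkn h4).1
    have := Fintype.card_le_of_injective ψ hinj
    rwa [Fintype.card_coe, Fintype.card_fin] at this
  have hne : S.Nonempty := ⟨_, hmemS⟩
  exact le_antisymm (Nat.sInf_le hmemS) (hlb _ (Nat.sInf_mem hne))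

noncomputable def Vf (k n l : ℕ) : Finset (Fin k → ℕ) := by
  classical
  exact (Fintype.piFinset fun _ : Fin k => Finset.range (l + 1)).filter
    (fun x => Valid n x ∧ ∑ i, x i = l)

lemma mem_Vf {l : ℕ} {x : Fin k → ℕ} : x ∈ Vf k n l ↔ Valid n x ∧ ∑ i, x i = l := by
  classical
  simp only [Vf, Finset.mem_filter, Fintype.mem_piFinset, Finset.mem_range]
  constructor
  · rintro ⟨-, h⟩; convert h
  · rintro ⟨h1, h2⟩
    refine ⟨fun i => ?_, by convert And.intro h1 h2⟩
    have : x i ≤ ∑ j, x j := Finset.single_le_sum (fun j _ => Nat.zero_le (x j))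
      (Finset.mem_univ i)
    omega

lemma sum_ideals_eq (hk : 0 < k) (hn : 0 < n) (hkn : Nat.Coprime k n) (l : ℕ) :
    (∑ᶠ Δ ∈ {Δ : Set ℕ | IsSemigroupIdeal (Gam k n) Δ ∧ (Gam k n \ Δ).ncard = l},
      ((1 : Polynomial ℤ) - Polynomial.X) ^ semigroupIdealMinGens (Gam k n) Δ)
    = ∑ x ∈ Vf k n l, ((1 : Polynomial ℤ) - Polynomial.X) ^ str n x := by
  have hSet : {Δ : Set ℕ | IsSemigroupIdeal (Gam k n) Δ ∧ (Gam k n \ Δ).ncard = l}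
      = Dset k n '' ↑(Vf k n l) := by
    ext Δ
    simp only [Set.mem_setOf_eq, Set.mem_image, Finset.mem_coe]
    constructor
    · rintro ⟨⟨hne, hsub, hcl⟩, hcol⟩
      obtain ⟨x, hxv, rfl⟩ := ideal_eq_Dset hk hkn hne hsub hcl
      refine ⟨x, mem_Vf.mpr ⟨hxv, ?_⟩, rfl⟩
      rw [← colength_Dset hk hkn x, hcol]
    · rintro ⟨x, hx, rfl⟩
      obtain ⟨hxv, hxs⟩ := mem_Vf.mp hx
      exact ⟨isSemigroupIdeal_Dset hk hxv, by rw [colength_Dset hk hkn x, hxs]⟩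
  rw [hSet, finsum_mem_image (fun a _ b _ h => Dset_injective hkn h),
    finsum_mem_coe_finset]
  apply Finset.sum_congr rfl
  intro x hx
  rw [minGens_Dset hk hn hkn (mem_Vf.mp hx).1]

lemma valid_antitone {x : Fin k → ℕ} (hx : Valid n x) {i j : Fin k}
    (hij : i.val ≤ j.val) : x j ≤ x i := by
  have key : ∀ d : ℕ, ∀ i j : Fin k, j.val = i.val + d → x j ≤ x i := by
    intro d
    induction d with
    | zero =>
      intro i j h
      exact le_of_eq (congrArg x (Fin.ext (by omega)))
    | succ d ih =>
      intro i j h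
      have hj0 : j.val ≠ 0 := by omega
      have h2 := hx j
      have h3 : wgt n j = 0 := by simp [wgt, hj0]
      have h4 : (cpred j).val = i.val + d := by
        rw [cpred_val_of_ne_zero j hj0]; omega
      have h5 := ih i (cpred j) h4
      omega
  exact key (j.val - i.val) i j (by omega)

lemma valid_shift_iff {x : Fin k → ℕ} : Valid n (fun i => x i + 1) ↔ Valid n x := by
  constructor
  · intro h i; have := h i; simp only at this; omega
  · intro h i; have := h i; simp only; omega

lemma str_shift (x : Fin k → ℕ) : str n (fun i => x i + 1) = str n x := by
  unfold str DsF
  congr 1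
  apply Finset.filter_congr
  intro i _
  simp only
  constructor
  · intro h; omega
  · intro h; omega

lemma all_pos_of_last_pos (hk : 0 < k) {x : Fin k → ℕ} (hx : Valid n x)
    (hlast : x ⟨k - 1, by omega⟩ ≠ 0) (i : Fin k) : 1 ≤ x i := by
  have h := valid_antitone hx (i := i) (j := ⟨k - 1, by omega⟩) (by
    have := i.isLt
    simp only
    omega)
  omega

section SplitShift

lemma filter_last_pos_empty (hk : 0 < k) {l : ℕ} (hl : l < k) : (Vf k n l).filter
    (fun x => ¬ x ⟨k - 1, by omega⟩ = 0) = ∅ := by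
  classical
  rw [Finset.eq_empty_iff_forall_notMem]
  intro x hx
  rw [Finset.mem_filter] at hx
  obtain ⟨hxV, hlast⟩ := hx
  obtain ⟨hval, hsum⟩ := mem_Vf.mp hxV
  have hall : ∀ i : Fin k, 1 ≤ x i := all_pos_of_last_pos hk hval hlast
  have h1 : (k : ℕ) ≤ ∑ i, x i := by
    calc (k : ℕ) = ∑ _i : Fin k, 1 := by simp
    _ ≤ ∑ i, x i := Finset.sum_le_sum (fun i _ => hall i)
  omega

lemma shift_sum_eq (hk : 0 < k) (l : ℕ) :
    ∑ x ∈ (Vf k n (l + k)).filter (fun x => ¬ x ⟨k - 1, by omega⟩ = 0),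
      ((1 : Polynomial ℤ) - Polynomial.X) ^ str n x
    = ∑ x ∈ Vf k n l, ((1 : Polynomial ℤ) - Polynomial.X) ^ str n x := by
  classical
  refine Finset.sum_bij' (i := fun x _ => fun i => x i - 1)
    (j := fun y _ => fun i => y i + 1) ?_ ?_ ?_ ?_ ?_
  · intro x hx
    rw [Finset.mem_filter] at hx
    obtain ⟨hxV, hlast⟩ := hx
    obtain ⟨hval, hsum⟩ := mem_Vf.mp hxV
    have hall : ∀ i : Fin k, 1 ≤ x i := all_pos_of_last_pos hk hval hlast
    refine mem_Vf.mpr ⟨?_, ?_⟩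
    · intro i
      have h1 := hval i
      have h2 := hall i
      have h3 := hall (cpred i)
      simp only
      omega
    · have h4 : ∑ i, (x i - 1) + ∑ _i : Fin k, 1 = ∑ i, x i := by
        rw [← Finset.sum_add_distrib]
        apply Finset.sum_congr rfl
        intro i _
        have := hall i
        omega
      simp only [Finset.sum_const, Finset.card_univ, Fintype.card_fin, smul_eq_mul,
        mul_one] at h4
      show ∑ i, (x i - 1) = l
      omega
  · intro y hy
    obtain ⟨hval, hsum⟩ := mem_Vf.mp hy
    rw [Finset.mem_filter]
    constructor
    · refine mem_Vf.mpr ⟨?_, ?_⟩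
      · intro i
        have h1 := hval i
        simp only
        omega
      · have h4 : ∑ i, (y i + 1) = ∑ i, y i + ∑ _i : Fin k, 1 := Finset.sum_add_distrib
        simp only [Finset.sum_const, Finset.card_univ, Fintype.card_fin, smul_eq_mul,
          mul_one] at h4
        show ∑ i, (y i + 1) = l + k
        omega
    · simp
  · intro x hx
    rw [Finset.mem_filter] at hx
    have hall : ∀ i : Fin k, 1 ≤ x i :=
      all_pos_of_last_pos hk (mem_Vf.mp hx.1).1 hx.2
    funext i
    have := hall i
    simp only
    omega
  · intro y _
    funext i
    simp
  · intro x hx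
    rw [Finset.mem_filter] at hx
    have hall : ∀ i : Fin k, 1 ≤ x i :=
      all_pos_of_last_pos hk (mem_Vf.mp hx.1).1 hx.2
    congr 1
    unfold str DsF
    congr 1
    apply Finset.filter_congr
    intro i _
    have h1 := hall i
    have h2 := hall (cpred i)
    simp only
    constructor
    · intro h; omega
    · intro h; omega

end SplitShift

def Phi (k : ℕ) (f : ℕ → ℕ) : Fin k → ℕ := fun i => ∑ j ∈ Finset.Ico (i.val + 1) k, f j

section PhiLemmas

variable {f : ℕ → ℕ}

lemma ph_last (hk : 0 < k) (f : ℕ → ℕ) : Phi k f ⟨k - 1, by omega⟩ = 0 := by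
  unfold Phi
  have h : k - 1 + 1 = k := by omega
  simp only [h]
  simp

lemma ph_le_n (hfs : ∑ j ∈ Finset.range k, f j = n) (i : Fin k) : Phi k f i ≤ n := by
  unfold Phi
  rw [← hfs, Finset.range_eq_Ico]
  exact Finset.sum_le_sum_of_subset (Finset.Ico_subset_Ico (Nat.zero_le _) le_rfl)

lemma ph_step (i : Fin k) (hi : i.val ≠ 0) :
    Phi k f (cpred i) = f i.val + Phi k f i := by
  unfold Phi
  have h : (cpred i).val + 1 = i.val := by
    rw [cpred_val_of_ne_zero i hi]; omega
  rw [h]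
  exact Finset.sum_eq_sum_Ico_succ_bot i.isLt f

lemma ph_zero (hk : 0 < k) (hfs : ∑ j ∈ Finset.range k, f j = n) :
    Phi k f ⟨0, hk⟩ + f 0 = n := by
  unfold Phi
  rw [Finset.range_eq_Ico, Finset.sum_eq_sum_Ico_succ_bot hk f] at hfs
  simp only
  omega

lemma ph_valid (hk : 0 < k) (hfs : ∑ j ∈ Finset.range k, f j = n) :
    Valid n (Phi k f) := by
  intro i
  by_cases hi : i.val = 0
  · have hw : wgt n i = n := by simp [wgt, hi]
    have h1 := ph_le_n hfs i
    omega
  · have hw : wgt n i = 0 := by simp [wgt, hi]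
    have h2 := ph_step (f := f) i hi
    omega

lemma ph_descent (hk : 0 < k) (hfs : ∑ j ∈ Finset.range k, f j = n) (i : Fin k) :
    (Phi k f i < Phi k f (cpred i) + wgt n i ↔ f i.val ≠ 0) := by
  by_cases hi : i.val = 0
  · have hw : wgt n i = n := by simp [wgt, hi]
    have hie : i = ⟨0, hk⟩ := Fin.ext hi
    have hce : cpred i = ⟨k - 1, by omega⟩ := by
      apply Fin.ext
      rw [cpred_val_of_eq_zero i hi]
    have h1 := ph_zero hk hfs
    rw [hw, hce, ph_last hk f, hie]
    show Phi k f ⟨0, hk⟩ < 0 + n ↔ ¬ f 0 = 0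
    omega
  · have hw : wgt n i = 0 := by simp [wgt, hi]
    have h2 := ph_step (f := f) i hi
    rw [hw, h2]
    omega

lemma ph_str (hk : 0 < k) (hfs : ∑ j ∈ Finset.range k, f j = n) :
    str n (Phi k f) = ∑ j ∈ Finset.range k, (if f j = 0 then 0 else 1) := by
  classical
  rw [str, DsF, Finset.card_filter,
    ← Fin.sum_univ_eq_sum_range (fun j => if f j = 0 then 0 else 1) k]
  apply Finset.sum_congr rfl
  intro i _
  have hd := ph_descent hk hfs i
  by_cases hf : f i.val = 0 <;> simp [hf, hd]

lemma ph_sum (hk : 0 < k) (f : ℕ → ℕ) :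
    ∑ i : Fin k, Phi k f i = ∑ j ∈ Finset.range k, j * f j := by
  classical
  unfold Phi
  rw [← Fin.sum_univ_eq_sum_range (fun j => j * f j) k]
  rw [Fin.sum_univ_eq_sum_range (fun i => ∑ j ∈ Finset.Ico (i + 1) k, f j) k,
    Fin.sum_univ_eq_sum_range (fun j => j * f j) k]
  have h1 : ∀ i : ℕ, ∑ j ∈ Finset.Ico (i + 1) k, f j
      = ∑ j ∈ Finset.range k, if i + 1 ≤ j then f j else 0 := by
    intro i
    rw [← Finset.sum_filter]
    congr 1
    ext a
    simp only [Finset.mem_Ico, Finset.mem_filter, Finset.mem_range]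
    omega
  calc ∑ i ∈ Finset.range k, ∑ j ∈ Finset.Ico (i + 1) k, f j
      = ∑ i ∈ Finset.range k, ∑ j ∈ Finset.range k, if i + 1 ≤ j then f j else 0 := by
        exact Finset.sum_congr rfl fun i _ => h1 i
    _ = ∑ j ∈ Finset.range k, ∑ i ∈ Finset.range k, if i + 1 ≤ j then f j else 0 :=
        Finset.sum_comm
    _ = ∑ j ∈ Finset.range k, j * f j := by
        apply Finset.sum_congr rfl
        intro j hj
        rw [Finset.mem_range] at hj
        rw [← Finset.sum_filter]
        have h2 : Finset.filter (fun i => i + 1 ≤ j) (Finset.range k) = Finset.range j := by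
          ext a
          simp only [Finset.mem_filter, Finset.mem_range]
          omega
        rw [h2, Finset.sum_const, Finset.card_range, smul_eq_mul]

end PhiLemmas

noncomputable def Psi (k n : ℕ) (hk : 0 < k) (x : Fin k → ℕ) : ℕ →₀ ℕ :=
  Finsupp.onFinset (Finset.range k)
    (fun j => if h : j < k then
        (if j = 0 then n - x ⟨0, hk⟩ else x ⟨j - 1, by omega⟩ - x ⟨j, h⟩)
      else 0)
    (fun j hj => by
      rw [Finset.mem_range]
      by_contra hc
      exact hj (dif_neg hc))

section PsiLemmas

variable {x : Fin k → ℕ} (hk : 0 < k)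

lemma psi_apply_zero : Psi k n hk x 0 = n - x ⟨0, hk⟩ := by
  simp [Psi, hk]

lemma psi_apply_pos {j : ℕ} (h : j < k) (hj : j ≠ 0) :
    Psi k n hk x j = x ⟨j - 1, by omega⟩ - x ⟨j, h⟩ := by
  simp [Psi, h, hj]

lemma psi_apply_ge {j : ℕ} (h : k ≤ j) : Psi k n hk x j = 0 := by
  simp [Psi, Nat.not_lt.mpr h]

lemma tele {y : ℕ → ℕ} (hm : ∀ j, y (j + 1) ≤ y j) (m : ℕ) :
    ∑ j ∈ Finset.range m, (y j - y (j + 1)) = y 0 - y m := by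
  induction m with
  | zero => simp
  | succ m ih =>
    rw [Finset.sum_range_succ, ih]
    have h1 : y (m + 1) ≤ y m := hm m
    have h2 : y m ≤ y 0 := antitone_nat_of_succ_le hm (Nat.zero_le m)
    omega

/-- the clamped sequence -/
lemma clamp_mono (hval : Valid n x) :
    ∀ j, x ⟨min (j + 1) (k - 1), by omega⟩ ≤ x ⟨min j (k - 1), by omega⟩ := by
  intro j
  exact valid_antitone hval (by show min j (k-1) ≤ min (j+1) (k-1); omega)

lemma PhiPsi (hval : Valid n x) (hlast : x ⟨k - 1, by omega⟩ = 0) :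
    Phi k (Psi k n hk x) = x := by
  funext i
  set y : ℕ → ℕ := fun j => x ⟨min j (k - 1), by omega⟩ with hy
  have hym : ∀ j, y (j + 1) ≤ y j := clamp_mono hk hval
  show ∑ j ∈ Finset.Ico (i.val + 1) k, Psi k n hk x j = x i
  rw [Finset.sum_Ico_eq_sum_range]
  have key : ∀ j ∈ Finset.range (k - (i.val + 1)),
      Psi k n hk x (i.val + 1 + j) = y (i.val + j) - y (i.val + (j + 1)) := by
    intro j hj
    rw [Finset.mem_range] at hj
    have h1 : i.val + 1 + j < k := by omega
    have h2 : i.val + 1 + j ≠ 0 := by omega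
    rw [psi_apply_pos hk h1 h2]
    have e1 : (⟨i.val + 1 + j - 1, by omega⟩ : Fin k) = ⟨min (i.val + j) (k - 1), by omega⟩ := by
      apply Fin.ext
      show i.val + 1 + j - 1 = min (i.val + j) (k - 1)
      omega
    have e2 : (⟨i.val + 1 + j, h1⟩ : Fin k) = ⟨min (i.val + (j + 1)) (k - 1), by omega⟩ := by
      apply Fin.ext
      show i.val + 1 + j = min (i.val + (j + 1)) (k - 1)
      omega
    rw [e1, e2]
  rw [Finset.sum_congr rfl key]
  have htele := tele (y := fun t => y (i.val + t)) (fun j => by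
    have := hym (i.val + j)
    simpa [Nat.add_assoc] using this) (k - (i.val + 1))
  rw [htele]
  clear htele
  have e3 : i.val + (k - (i.val + 1)) = k - 1 := by have := i.isLt; omega
  have e4 : y (i.val + 0) = x i := by
    apply congrArg x
    apply Fin.ext
    show min (i.val + 0) (k - 1) = i.val
    have := i.isLt
    omega
  rw [e3]
  have e5 : y (k - 1) = x ⟨k - 1, by omega⟩ := by
    apply congrArg x
    apply Fin.ext
    show min (k - 1) (k - 1) = k - 1
    omega
  rw [e4, e5, hlast]
  omega

lemma PsiPhi {f : ℕ → ℕ} (hf0 : ∀ j, k ≤ j → f j = 0)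
    (hfs : ∑ j ∈ Finset.range k, f j = n) (j : ℕ) :
    Psi k n hk (Phi k f) j = f j := by
  rcases Nat.lt_or_ge j k with h | h
  · rcases Nat.eq_zero_or_pos j with rfl | hj
    · rw [psi_apply_zero hk]
      have := ph_zero hk hfs
      omega
    · rw [psi_apply_pos hk h (by omega)]
      have hstep := ph_step (f := f) ⟨j, h⟩ (by show j ≠ 0; omega)
      have hce : cpred (⟨j, h⟩ : Fin k) = ⟨j - 1, by omega⟩ := by
        apply Fin.ext
        rw [cpred_val_of_ne_zero _ (by show j ≠ 0; omega)]
      rw [hce] at hstep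
      rw [hstep]
      simp
  · rw [psi_apply_ge hk h, hf0 j h]

lemma x_zero_le (hval : Valid n x) (hlast : x ⟨k - 1, by omega⟩ = 0) :
    x ⟨0, hk⟩ ≤ n := by
  have h := hval ⟨0, hk⟩
  have hce : cpred (⟨0, hk⟩ : Fin k) = ⟨k - 1, by omega⟩ := by
    apply Fin.ext
    rw [cpred_val_of_eq_zero _ rfl]
  rw [hce, hlast] at h
  simpa [wgt] using h

lemma psi_sum (hval : Valid n x) (hlast : x ⟨k - 1, by omega⟩ = 0) :
    ∑ j ∈ Finset.range k, Psi k n hk x j = n := by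
  set y : ℕ → ℕ := fun j => x ⟨min j (k - 1), by omega⟩ with hy
  have hym : ∀ j, y (j + 1) ≤ y j := clamp_mono hk hval
  rw [Finset.range_eq_Ico, Finset.sum_eq_sum_Ico_succ_bot hk, Finset.sum_Ico_eq_sum_range]
  have key : ∀ j ∈ Finset.range (k - 1),
      Psi k n hk x (1 + j) = y j - y (j + 1) := by
    intro j hj
    rw [Finset.mem_range] at hj
    have h1 : 1 + j < k := by omega
    rw [psi_apply_pos hk h1 (by omega)]
    have e1 : (⟨1 + j - 1, by omega⟩ : Fin k) = ⟨min j (k - 1), by omega⟩ := by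
      apply Fin.ext
      show 1 + j - 1 = min j (k - 1)
      omega
    have e2 : (⟨1 + j, h1⟩ : Fin k) = ⟨min (j + 1) (k - 1), by omega⟩ := by
      apply Fin.ext
      show 1 + j = min (j + 1) (k - 1)
      omega
    rw [e1, e2]
  rw [Finset.sum_congr rfl key, tele hym (k - 1), psi_apply_zero hk]
  have e4 : y 0 = x ⟨0, hk⟩ := by
    apply congrArg x
    apply Fin.ext
    show min 0 (k - 1) = 0
    omega
  have e5 : y (k - 1) = x ⟨k - 1, by omega⟩ := by
    apply congrArg x
    apply Fin.ext
    show min (k - 1) (k - 1) = k - 1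
    omega
  rw [e4, e5, hlast]
  have := x_zero_le hk hval hlast
  omega

end PsiLemmas

lemma B_to_A (hk : 0 < k) (l : ℕ) :
    ∑ x ∈ (Vf k n l).filter (fun x => x ⟨k - 1, by omega⟩ = 0),
      ((1 : Polynomial ℤ) - Polynomial.X) ^ str n x
    = ∑ f ∈ ((Finset.range k).finsuppAntidiag n).filter
        (fun f => ∑ j ∈ Finset.range k, j * f j = l),
      ((1 : Polynomial ℤ) - Polynomial.X) ^
        (∑ j ∈ Finset.range k, if f j = 0 then 0 else 1) := by
  classical
  refine Finset.sum_bij' (i := fun x _ => Psi k n hk x) (j := fun f _ => Phi k ⇑f)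
    ?_ ?_ ?_ ?_ ?_
  · intro x hx
    rw [Finset.mem_filter] at hx
    obtain ⟨hxV, hlast⟩ := hx
    obtain ⟨hval, hsum⟩ := mem_Vf.mp hxV
    rw [Finset.mem_filter, Finset.mem_finsuppAntidiag]
    refine ⟨⟨psi_sum hk hval hlast, ?_⟩, ?_⟩
    · exact Finsupp.support_onFinset_subset
    · have h1 : ∑ i : Fin k, Phi k (⇑(Psi k n hk x)) i
          = ∑ j ∈ Finset.range k, j * Psi k n hk x j := ph_sum hk _
      rw [PhiPsi hk hval hlast] at h1
      rw [← h1, hsum]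
  · intro f hf
    rw [Finset.mem_filter, Finset.mem_finsuppAntidiag] at hf
    obtain ⟨⟨hfs, hfsupp⟩, hfl⟩ := hf
    rw [Finset.mem_filter]
    refine ⟨mem_Vf.mpr ⟨ph_valid hk hfs, ?_⟩, ph_last hk _⟩
    rw [ph_sum hk]
    exact hfl
  · intro x hx
    rw [Finset.mem_filter] at hx
    exact PhiPsi hk (mem_Vf.mp hx.1).1 hx.2
  · intro f hf
    rw [Finset.mem_filter, Finset.mem_finsuppAntidiag] at hf
    obtain ⟨⟨hfs, hfsupp⟩, hfl⟩ := hf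
    have hf0 : ∀ j, k ≤ j → f j = 0 := by
      intro j hj
      by_contra hc
      have h2 := hfsupp (Finsupp.mem_support_iff.mpr hc)
      rw [Finset.mem_range] at h2
      omega
    exact Finsupp.ext (PsiPhi hk hf0 hfs)
  · intro x hx
    rw [Finset.mem_filter] at hx
    obtain ⟨hxV, hlast⟩ := hx
    obtain ⟨hval, hsum⟩ := mem_Vf.mp hxV
    have h1 : str n x = str n (Phi k (⇑(Psi k n hk x))) := by
      rw [PhiPsi hk hval hlast]
    rw [h1, ph_str hk (psi_sum hk hval hlast)]

lemma rhs_coeff (l : ℕ) :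
    PowerSeries.coeff (R := Polynomial ℤ) l
      (PowerSeries.coeff (R := PowerSeries (Polynomial ℤ)) n
        (∏ i ∈ Finset.range k,
          (1 + (PowerSeries.C (R := PowerSeries (Polynomial ℤ)))
              (PowerSeries.C (R := Polynomial ℤ) ((1 : Polynomial ℤ) - Polynomial.X)) *
            PowerSeries.mk (fun m =>
              if m = 0 then 0
              else (PowerSeries.X : PowerSeries (Polynomial ℤ)) ^ (i * m)))))
    = ∑ f ∈ ((Finset.range k).finsuppAntidiag n).filter
        (fun f => ∑ j ∈ Finset.range k, j * f j = l),
      ((1 : Polynomial ℤ) - Polynomial.X) ^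
        (∑ j ∈ Finset.range k, if f j = 0 then 0 else 1) := by
  classical
  rw [PowerSeries.coeff_prod, map_sum, Finset.sum_filter]
  apply Finset.sum_congr rfl
  intro f _
  have hcoeff : ∀ i m : ℕ,
      PowerSeries.coeff (R := PowerSeries (Polynomial ℤ)) m
        (1 + (PowerSeries.C (R := PowerSeries (Polynomial ℤ)))
            (PowerSeries.C (R := Polynomial ℤ) ((1 : Polynomial ℤ) - Polynomial.X)) *
          PowerSeries.mk (fun m =>
            if m = 0 then 0
            else (PowerSeries.X : PowerSeries (Polynomial ℤ)) ^ (i * m)))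
      = if m = 0 then 1
        else PowerSeries.C (R := Polynomial ℤ) ((1 : Polynomial ℤ) - Polynomial.X) *
          PowerSeries.X ^ (i * m) := by
    intro i m
    rw [map_add, PowerSeries.coeff_one, PowerSeries.coeff_C_mul, PowerSeries.coeff_mk]
    by_cases hm : m = 0 <;> simp [hm]
  have h1 : (∏ i ∈ Finset.range k,
      PowerSeries.coeff (R := PowerSeries (Polynomial ℤ)) (f i)
        (1 + (PowerSeries.C (R := PowerSeries (Polynomial ℤ)))
            (PowerSeries.C (R := Polynomial ℤ) ((1 : Polynomial ℤ) - Polynomial.X)) *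
          PowerSeries.mk (fun m =>
            if m = 0 then 0
            else (PowerSeries.X : PowerSeries (Polynomial ℤ)) ^ (i * m))))
      = (PowerSeries.C (R := Polynomial ℤ) (((1 : Polynomial ℤ) - Polynomial.X) ^
          (∑ j ∈ Finset.range k, if f j = 0 then 0 else 1))) *
        PowerSeries.X ^ (∑ j ∈ Finset.range k, j * f j) := by
    rw [map_pow]
    rw [← Finset.prod_pow_eq_pow_sum (s := Finset.range k)
      (f := fun j => if f j = 0 then 0 else 1)
      (a := PowerSeries.C (R := Polynomial ℤ) ((1 : Polynomial ℤ) - Polynomial.X))]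
    rw [← Finset.prod_pow_eq_pow_sum (s := Finset.range k)
      (f := fun j => j * f j) (a := (PowerSeries.X : PowerSeries (Polynomial ℤ)))]
    rw [← Finset.prod_mul_distrib]
    apply Finset.prod_congr rfl
    intro i _
    rw [hcoeff i (f i)]
    by_cases hfi : f i = 0
    · simp [hfi]
    · simp [hfi]
  rw [h1, PowerSeries.coeff_C_mul, PowerSeries.coeff_X_pow]
  by_cases hm : ∑ j ∈ Finset.range k, j * f j = l
  · simp [hm]
  · have : ¬ (l = ∑ j ∈ Finset.range k, j * f j) := fun h => hm h.symm
    simp [hm, this]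

end StaircaseAux

open StaircaseAux

/-- For coprime positive `k, n`, `Γ = ⟨k,n⟩`, and
`G(q,a) = Σ_Δ q^{c(Δ)} (1−a)^{m(Δ)} ∈ (ℤ[a])[[q]]` (sum over semigroup ideals of `Γ`),
`(1 − q^k)·G(q,a)` is the coefficient of `ξ^n` in
`∏_{i=0}^{k−1} (1 + (1−a) Σ_{m ≥ 1} ξ^m q^{im})` computed in `(ℤ[a][[q]])[[ξ]]`. -/
theorem gen_function_staircase_residue (k n : ℕ) (hk : 0 < k) (hn : 0 < n)
    (hkn : Nat.Coprime k n)
    (Γ : Set ℕ) (hΓ : Γ = {m : ℕ | ∃ a b : ℕ, m = a * k + b * n})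
    (G : PowerSeries (Polynomial ℤ))
    (hG : ∀ l, PowerSeries.coeff (R := Polynomial ℤ) l G =
      ∑ᶠ Δ ∈ {Δ : Set ℕ | IsSemigroupIdeal Γ Δ ∧ (Γ \ Δ).ncard = l},
        ((1 : Polynomial ℤ) - Polynomial.X) ^ semigroupIdealMinGens Γ Δ) :
    (1 - PowerSeries.X ^ k) * G =
      PowerSeries.coeff (R := PowerSeries (Polynomial ℤ)) n
        (∏ i ∈ Finset.range k,
          (1 + (PowerSeries.C (R := PowerSeries (Polynomial ℤ)))
              (PowerSeries.C (R := Polynomial ℤ) ((1 : Polynomial ℤ) - Polynomial.X)) *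
            PowerSeries.mk (fun m =>
              if m = 0 then 0
              else (PowerSeries.X : PowerSeries (Polynomial ℤ)) ^ (i * m)))) := by
  classical
  subst hΓ
  have hG' : ∀ l, PowerSeries.coeff (R := Polynomial ℤ) l G =
      ∑ x ∈ Vf k n l, ((1 : Polynomial ℤ) - Polynomial.X) ^ str n x :=
    fun l => (hG l).trans (sum_ideals_eq hk hn hkn l)
  apply PowerSeries.ext
  intro l
  have hLHS : (1 - PowerSeries.X ^ k) * G = G - G * PowerSeries.X ^ k := by ring
  rw [hLHS, map_sub, PowerSeries.coeff_mul_X_pow', rhs_coeff (k := k) (n := n) l,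
    ← B_to_A hk l]
  have hsplit := Finset.sum_filter_add_sum_filter_not (Vf k n l)
    (fun x => x ⟨k - 1, by omega⟩ = 0)
    (fun x => ((1 : Polynomial ℤ) - Polynomial.X) ^ str n x)
  rcases le_or_gt k l with hkl | hkl
  · rw [if_pos hkl, hG', hG']
    have hshift := shift_sum_eq (n := n) hk (l - k)
    rw [show l - k + k = l from by omega] at hshift
    rw [← hsplit, hshift]
    ring
  · rw [if_neg (by omega), hG']
    rw [← hsplit, filter_last_pos_empty hk hkl, Finset.sum_empty]
    ring
end
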